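/- For all natural numbers n > m ≥ 1, ∑_{j=1}^n (-1)^j (n!)² j^{2m} / ((n-j)!(n+j)!) = 0. -/

import Mathlib

open Finset fwdDiff

lemma negOnePow_congr (a b : ℕ) (h : a % 2 = b % 2) : ((-1 : ℚ)) ^ a = (-1) ^ b := by
  rcases Nat.even_or_odd a with ha | ha
  · rw [Even.neg_one_pow ha,
      Even.neg_one_pow (Nat.even_iff.mpr (by rw [← h]; exact Nat.even_iff.mp ha))]
  · rw [Odd.neg_one_pow ha,
      Odd.neg_one_pow (Nat.odd_iff.mpr (by rw [← h]; exact Nat.odd_iff.mp ha))]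

lemma fd_pow_zero : ∀ d : ℕ, ∀ N : ℕ, d < N →
    (Δ_[(1:ℚ)])^[N] (fun x : ℚ => x ^ d) = 0 := by
  intro d
  induction d using Nat.strong_induction_on with
  | _ d ih =>
    intro N hN
    obtain ⟨N', rfl⟩ : ∃ N', N = N' + 1 := ⟨N - 1, by omega⟩
    have hΔ : Δ_[(1:ℚ)] (fun x : ℚ => x ^ d)
        = ∑ k ∈ range d, (d.choose k : ℚ) • (fun x : ℚ => x ^ k) := by
      funext x
      simp only [fwdDiff, Finset.sum_apply, Pi.smul_apply, smul_eq_mul]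
      have h := add_pow x (1:ℚ) d
      rw [Finset.sum_range_succ] at h
      simp only [one_pow, mul_one, Nat.choose_self, Nat.cast_one] at h
      rw [h, add_sub_cancel_right]
      exact Finset.sum_congr rfl fun k _ => mul_comm _ _
    rw [Function.iterate_succ_apply, hΔ, fwdDiff_iter_finset_sum]
    apply Finset.sum_eq_zero
    intro k hk
    have hkd := Finset.mem_range.mp hk
    rw [fwdDiff_iter_const_smul, ih k hkd N' (by omega)]
    simp

theorem alt_factorial_sum_even_power_zero (n m : ℕ) (hm : 1 ≤ m) (hmn : m < n) :
    (∑ j ∈ Finset.Icc 1 n, (-1 : ℚ) ^ j *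
      ((n.factorial : ℚ)) ^ 2 * (j : ℚ) ^ (2 * m) /
        (((n - j).factorial : ℚ) * ((n + j).factorial : ℚ))) = 0 := by
  set g : ℕ → ℚ := fun k => (-1 : ℚ) ^ k * ((2 * n).choose k : ℚ) * ((k : ℚ) - n) ^ (2 * m)
    with hg
  have key : ∑ k ∈ range (2 * n + 1), g k = 0 := by
    have h0 := fwdDiff_iter_eq_sum_shift (1 : ℚ) (fun x : ℚ => x ^ (2 * m)) (2 * n) (-(n : ℚ))
    rw [fd_pow_zero (2 * m) (2 * n) (by omega)] at h0
    simp only [Pi.zero_apply] at h0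
    calc ∑ k ∈ range (2 * n + 1), g k
        = ∑ k ∈ range (2 * n + 1),
            (((-1 : ℤ) ^ (2 * n - k) * (2 * n).choose k) • (-(n : ℚ) + k • (1:ℚ)) ^ (2 * m)) := by
          refine Finset.sum_congr rfl fun k hk => ?_
          have hk2 : k ≤ 2 * n := by
            have := Finset.mem_range.mp hk; omega
          simp only [hg, zsmul_eq_mul, nsmul_eq_mul, mul_one]
          push_cast
          rw [negOnePow_congr (2 * n - k) k (by omega)]
          ring
      _ = 0 := h0.symm
  have hgn : g n = 0 := by
    simp only [hg, sub_self]
    rw [zero_pow (by omega)]; ring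
  have spl2 : ∑ i ∈ Ico n (2 * n + 1), g i = g n + ∑ i ∈ range n, g (n + 1 + i) := by
    rw [Finset.sum_Ico_eq_sum_range, show 2 * n + 1 - n = n + 1 from by omega,
      Finset.sum_range_succ', add_comm]
    congr 1
    exact Finset.sum_congr rfl fun i _ => by rw [show n + (i + 1) = n + 1 + i from by omega]
  have split : ∑ k ∈ range (2 * n + 1), g k
      = ∑ i ∈ range n, g i + (g n + ∑ i ∈ range n, g (n + 1 + i)) := by
    rw [range_eq_Ico, ← Finset.sum_Ico_consecutive g (Nat.zero_le n) (by omega), spl2,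
      Nat.Ico_zero_eq_range]
  have hsym : ∀ i ∈ range n, g i = g (n + 1 + (n - 1 - i)) := by
    intro i hi
    have hin : i < n := Finset.mem_range.mp hi
    rw [show n + 1 + (n - 1 - i) = 2 * n - i from by omega]
    simp only [hg]
    have hch : (2 * n).choose (2 * n - i) = (2 * n).choose i := Nat.choose_symm (by omega)
    have hsign : ((-1 : ℚ) ^ (2 * n - i)) = (-1 : ℚ) ^ i := negOnePow_congr _ _ (by omega)
    have hval : (((2 * n - i : ℕ) : ℚ) - n) ^ (2 * m) = ((i : ℚ) - n) ^ (2 * m) := by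
      rw [show ((2 * n - i : ℕ) : ℚ) - n = -((i : ℚ) - n) from by
        push_cast [Nat.cast_sub (by omega : i ≤ 2 * n)]; ring,
        Even.neg_pow (even_two_mul m)]
    rw [hch, hsign, hval]
  have hrefl : ∑ i ∈ range n, g i = ∑ i ∈ range n, g (n + 1 + i) := by
    rw [← Finset.sum_range_reflect (fun i => g (n + 1 + i)) n]
    exact Finset.sum_congr rfl hsym
  have hhalf : ∑ i ∈ range n, g (n + 1 + i) = 0 := by
    have hk := key
    rw [split, hrefl, hgn] at hk
    linarith
  have hIcc : (∑ j ∈ Finset.Icc 1 n, (-1 : ℚ) ^ j *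
      ((n.factorial : ℚ)) ^ 2 * (j : ℚ) ^ (2 * m) /
        (((n - j).factorial : ℚ) * ((n + j).factorial : ℚ)))
      = ∑ i ∈ range n, (-1 : ℚ) ^ (1 + i) *
      ((n.factorial : ℚ)) ^ 2 * ((1 + i : ℕ) : ℚ) ^ (2 * m) /
        (((n - (1 + i)).factorial : ℚ) * ((n + (1 + i)).factorial : ℚ)) := by
    rw [show Finset.Icc 1 n = Finset.Ico 1 (n + 1) from rfl, Finset.sum_Ico_eq_sum_range]
    simp
  rw [hIcc]
  have hterm : ∀ i ∈ range n, (-1 : ℚ) ^ (1 + i) *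
      ((n.factorial : ℚ)) ^ 2 * ((1 + i : ℕ) : ℚ) ^ (2 * m) /
        (((n - (1 + i)).factorial : ℚ) * ((n + (1 + i)).factorial : ℚ))
      = ((-1 : ℚ) ^ n * (n.factorial : ℚ) ^ 2 / ((2 * n).factorial : ℚ)) * g (n + 1 + i) := by
    intro i hi
    have hin : i < n := Finset.mem_range.mp hi
    have hle : n + 1 + i ≤ 2 * n := by omega
    have hch := Nat.choose_mul_factorial_mul_factorial hle
    rw [show 2 * n - (n + 1 + i) = n - (1 + i) from by omega] at hch
    have hfac1 : ((n - (1 + i)).factorial : ℚ) ≠ 0 := Nat.cast_ne_zero.mpr (Nat.factorial_ne_zero _)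
    have hfac2 : (((n + (1 + i)).factorial : ℚ)) ≠ 0 := Nat.cast_ne_zero.mpr (Nat.factorial_ne_zero _)
    have hfac3 : (((2 * n).factorial : ℚ)) ≠ 0 := Nat.cast_ne_zero.mpr (Nat.factorial_ne_zero _)
    have hchQ : ((2 * n).choose (n + 1 + i) : ℚ) * ((n + (1 + i)).factorial : ℚ)
        * ((n - (1 + i)).factorial : ℚ) = ((2 * n).factorial : ℚ) := by
      rw [show n + (1 + i) = n + 1 + i from by omega]
      exact_mod_cast congrArg (Nat.cast : ℕ → ℚ) hch
    have harg : ((n + 1 + i : ℕ) : ℚ) - (n : ℚ) = ((1 + i : ℕ) : ℚ) := by push_cast; ring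
    have h2n : ((-1 : ℚ)) ^ (n * 2) = 1 := by
      rw [mul_comm]; simp [pow_mul]
    simp only [hg, harg]
    field_simp
    rw [← hchQ]
    ring_nf
    rw [h2n]
    ring
  rw [Finset.sum_congr rfl hterm, ← Finset.mul_sum, hhalf, mul_zero]
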